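/- Let Λ be a finite 2-graph with exactly three vertices u, v, w such that |uΛ^{e_1}u| = d_1, |uΛ^{e_2}u| = d_2, |uΛ^{e_1}v| = a_1, |uΛ^{e_2}v| = a_2, |uΛ^{e_1}w| = b_1, |vΛ^{e_2}w| = b_2 with all these numbers ≥ 1, and all other edge sets xΛ^{e_i}y empty (in particular vΛ^{e_1} = ∅ and wΛ^{e_1} = wΛ^{e_2} = ∅). Let r = (r_1, r_2) ∈ (0,∞)² and β > 0 satisfy βr_i > ln d_i for i = 1, 2, and set Δ := (1 - d_1 e^{-βr_1})(1 - d_2 e^{-βr_2}). Then the series y_w := ∑_{μ ∈ Λw} e^{-βr·d(μ)} (over all paths with source w) converges and y_w = 1 + b_2 e^{-βr_2} + b_1 e^{-βr_1} Δ^{-1} + a_2 b_2 e^{-2βr_2}(1 - d_2 e^{-βr_2})^{-1}. -/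
import Mathlib


/-- A `k`-graph: a countable small category `Λ` together with a degree functor
`d : Λ → ℕ^k` satisfying the unique factorisation property.  A morphism in
`Hom u v` is a path with range `u` and source `v` (so `Hom u v = uΛv`), and
`comp μ ν = μν` is defined when `s(μ) = r(ν)`. -/
structure KGraph (k : ℕ) where
  Obj : Type
  Hom : Obj → Obj → Type
  id : ∀ v : Obj, Hom v v
  comp : ∀ {u v w : Obj}, Hom u v → Hom v w → Hom u w
  id_comp : ∀ {u v : Obj} (f : Hom u v), comp (id u) f = f
  comp_id : ∀ {u v : Obj} (f : Hom u v), comp f (id v) = f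
  assoc : ∀ {u v w x : Obj} (f : Hom u v) (g : Hom v w) (h : Hom w x),
    comp (comp f g) h = comp f (comp g h)
  countable : Countable (Σ u : Obj, Σ v : Obj, Hom u v)
  deg : ∀ {u v : Obj}, Hom u v → Fin k → ℕ
  deg_id : ∀ v : Obj, deg (id v) = 0
  deg_comp : ∀ {u v w : Obj} (f : Hom u v) (g : Hom v w),
    deg (comp f g) = deg f + deg g
  factor : ∀ {u v : Obj} (f : Hom u v) (m n : Fin k → ℕ), deg f = m + n →
    ∃! p : Σ w : Obj, Hom u w × Hom w v,
      deg p.2.1 = m ∧ deg p.2.2 = n ∧ comp p.2.1 p.2.2 = f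

namespace KGraph

variable {k : ℕ}

/-- Paths with range `u`: the set `uΛ`. -/
abbrev PathFrom (Λ : KGraph k) (u : Λ.Obj) : Type := Σ v : Λ.Obj, Λ.Hom u v

/-- Paths with source `u`: the set `Λu`. -/
abbrev PathTo (Λ : KGraph k) (u : Λ.Obj) : Type := Σ v : Λ.Obj, Λ.Hom v u

/-- All paths of `Λ`. -/
abbrev Path (Λ : KGraph k) : Type := Σ u : Λ.Obj, Σ v : Λ.Obj, Λ.Hom u v

/-- `Λ` is finite if `Λ^n` is finite for every `n ∈ ℕ^k`. -/
def IsFinite (Λ : KGraph k) : Prop :=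
  ∀ n : Fin k → ℕ, {p : Λ.Path | Λ.deg p.2.2 = n}.Finite

/-- The standard generator `e_i` of `ℕ^k`. -/
def gen (k : ℕ) (i : Fin k) : Fin k → ℕ := Pi.single i 1

/-- The set of edges with range `u`: `uΛ^1 = ⋃ᵢ uΛ^{eᵢ}`. -/
def edges (Λ : KGraph k) (u : Λ.Obj) : Set (Λ.PathFrom u) :=
  {e | ∃ i : Fin k, Λ.deg e.2 = gen k i}

/-- The set `Λ^min(μ,ν)` of minimal common extensions of `μ` and `ν`:
pairs `(α, β)` with `μα = νβ` and `d(μα) = d(μ) ∨ d(ν)`. -/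
def MCE (Λ : KGraph k) {u a b : Λ.Obj} (μ : Λ.Hom u a) (ν : Λ.Hom u b) :
    Set (Σ x : Λ.Obj, Λ.Hom a x × Λ.Hom b x) :=
  {p | Λ.comp μ p.2.1 = Λ.comp ν p.2.2 ∧
    Λ.deg (Λ.comp μ p.2.1) = Λ.deg μ ⊔ Λ.deg ν}

/-- `E` is a finite exhaustive subset of `uΛ^1`: for every `μ ∈ uΛ` there is
`e ∈ E` with `Λ^min(μ,e) ≠ ∅`. -/
def IsExhaustive (Λ : KGraph k) (u : Λ.Obj) (E : Set (Λ.PathFrom u)) : Prop :=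
  E ⊆ Λ.edges u ∧ E.Finite ∧
    ∀ μ : Λ.PathFrom u, ∃ e ∈ E, (Λ.MCE μ.2 e.2).Nonempty

/-- `v` is an absolute source: `vΛ^{eᵢ} = ∅` for all `i`. -/
def IsAbsoluteSource (Λ : KGraph k) (v : Λ.Obj) : Prop :=
  ∀ (w : Λ.Obj) (f : Λ.Hom v w) (i : Fin k), Λ.deg f ≠ gen k i

end KGraph

section Helpers

namespace KGraph
variable {k : ℕ}

lemma deg_zero_aux (Λ : KGraph k) {x y : Λ.Obj} (f : Λ.Hom x y) (h : Λ.deg f = 0) :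
    (⟨x, Λ.id x, f⟩ : Σ z : Λ.Obj, Λ.Hom x z × Λ.Hom z y) = ⟨y, f, Λ.id y⟩ := by
  obtain ⟨p, hp, hu⟩ := Λ.factor f 0 0 (by simpa using h)
  have h1 := hu ⟨x, Λ.id x, f⟩ ⟨Λ.deg_id x, h, Λ.id_comp f⟩
  have h2 := hu ⟨y, f, Λ.id y⟩ ⟨h, Λ.deg_id y, Λ.comp_id f⟩
  rw [h1, h2]

lemma eq_of_deg_zero (Λ : KGraph k) {x y : Λ.Obj} (f : Λ.Hom x y) (h : Λ.deg f = 0) :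
    x = y :=
  congrArg Sigma.fst (Λ.deg_zero_aux f h)

lemma eq_id_of_deg_zero (Λ : KGraph k) {x : Λ.Obj} (f : Λ.Hom x x) (h : Λ.deg f = 0) :
    f = Λ.id x := by
  have h2 := (Sigma.mk.inj_iff.mp (Λ.deg_zero_aux f h)).2
  exact congrArg Prod.snd (eq_of_heq h2)

lemma exists_front (Λ : KGraph k) {x y : Λ.Obj} (f : Λ.Hom x y) (i : Fin k)
    (hi : Λ.deg f i ≠ 0) :
    ∃ (z : Λ.Obj) (e : Λ.Hom x z) (g : Λ.Hom z y),
      Λ.deg e = gen k i ∧ Λ.comp e g = f := by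
  obtain ⟨⟨z, e, g⟩, ⟨h1, _, h3⟩, -⟩ := Λ.factor f (gen k i) (Λ.deg f - gen k i)
    (by funext j; simp only [Pi.add_apply, Pi.sub_apply, gen, Pi.single_apply]
        split <;> [skip; omega]
        rename_i hj; subst hj; omega)
  exact ⟨z, e, g, h1, h3⟩

lemma comp_bij (Λ : KGraph k) {x z : Λ.Obj} (m n : Fin k → ℕ) :
    Function.Bijective
      (fun p : (Σ y : Λ.Obj, {e : Λ.Hom x y // Λ.deg e = m} × {g : Λ.Hom y z // Λ.deg g = n}) =>
        (⟨Λ.comp p.2.1.1 p.2.2.1, by rw [Λ.deg_comp, p.2.1.2, p.2.2.2]⟩ :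
          {f : Λ.Hom x z // Λ.deg f = m + n})) := by
  constructor
  · rintro ⟨y₁, ⟨e₁, he₁⟩, ⟨g₁, hg₁⟩⟩ ⟨y₂, ⟨e₂, he₂⟩, ⟨g₂, hg₂⟩⟩ h
    have hval : Λ.comp e₁ g₁ = Λ.comp e₂ g₂ := congrArg Subtype.val h
    obtain ⟨p, hp, hu⟩ := Λ.factor (Λ.comp e₁ g₁) m n (by rw [Λ.deg_comp, he₁, hg₁])
    have h1 := hu ⟨y₁, e₁, g₁⟩ ⟨he₁, hg₁, rfl⟩
    have h2 := hu ⟨y₂, e₂, g₂⟩ ⟨he₂, hg₂, hval.symm⟩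
    obtain ⟨rfl, hpq⟩ := Sigma.mk.inj_iff.mp (h1.trans h2.symm)
    obtain ⟨he, hg⟩ := Prod.ext_iff.mp (eq_of_heq hpq)
    subst he; subst hg; rfl
  · rintro ⟨f, hf⟩
    obtain ⟨⟨y, e, g⟩, ⟨h1, h2, h3⟩, -⟩ := Λ.factor f m n hf
    exact ⟨⟨y, ⟨e, h1⟩, ⟨g, h2⟩⟩, Subtype.ext h3⟩

lemma card_split (Λ : KGraph k) {x z : Λ.Obj} (y₀ : Λ.Obj) (m n : Fin k → ℕ)
    (hmid : ∀ (y : Λ.Obj) (e : Λ.Hom x y) (g : Λ.Hom y z),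
      Λ.deg e = m → Λ.deg g = n → y = y₀) :
    Nat.card {f : Λ.Hom x z // Λ.deg f = m + n} =
      Nat.card {e : Λ.Hom x y₀ // Λ.deg e = m} * Nat.card {g : Λ.Hom y₀ z // Λ.deg g = n} := by
  rw [← Nat.card_prod]
  apply Nat.card_congr
  refine ((Equiv.ofBijective _ (Λ.comp_bij m n)).symm.trans (Equiv.ofBijective
    (fun p : ({e : Λ.Hom x y₀ // Λ.deg e = m} × {g : Λ.Hom y₀ z // Λ.deg g = n}) =>
      (⟨y₀, p⟩ : Σ y : Λ.Obj, {e : Λ.Hom x y // Λ.deg e = m} × {g : Λ.Hom y z // Λ.deg g = n}))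
    ⟨fun p q h => by simpa using h, ?_⟩).symm)
  rintro ⟨y, e, g⟩
  have hy : y = y₀ := hmid y e.1 g.1 e.2 g.2
  subst hy
  exact ⟨(e, g), rfl⟩

lemma finite_fiber {Λ : KGraph k} (hΛ : Λ.IsFinite) (x y : Λ.Obj) (n : Fin k → ℕ) :
    Finite {f : Λ.Hom x y // Λ.deg f = n} := by
  have := (hΛ n).to_subtype
  apply Finite.of_injective
    (fun f : {f : Λ.Hom x y // Λ.deg f = n} =>
      (⟨⟨x, y, f.1⟩, f.2⟩ : {p : Λ.Path | Λ.deg p.2.2 = n}))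
  intro f g h
  have h2 := congrArg Subtype.val h
  apply Subtype.ext
  simpa using h2

end KGraph

private lemma hasSum_sigma_nonneg' {ι : Type*} {γ : ι → Type*} {f : (Σ i, γ i) → ℝ}
    (hf : ∀ x, 0 ≤ f x) {g : ι → ℝ} {S : ℝ}
    (h1 : ∀ i, HasSum (fun c => f ⟨i, c⟩) (g i)) (h2 : HasSum g S) : HasSum f S := by
  have hs : Summable f := by
    refine (summable_sigma_of_nonneg hf).2 ⟨fun i => (h1 i).summable, ?_⟩
    have he : (fun i => ∑' c, f ⟨i, c⟩) = g := funext fun i => (h1 i).tsum_eq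
    rw [he]; exact h2.summable
  have h3 : HasSum g (∑' x, f x) := hs.hasSum.sigma h1
  have h4 := hs.hasSum
  rwa [← h2.unique h3] at h4

private lemma hasSum_prod_nonneg' {f : ℕ × ℕ → ℝ} (hf : ∀ x, 0 ≤ f x) {g : ℕ → ℝ} {S : ℝ}
    (h1 : ∀ m, HasSum (fun n => f (m, n)) (g m)) (h2 : HasSum g S) : HasSum f S := by
  have := hasSum_sigma_nonneg' (f := fun p : (Σ _ : ℕ, ℕ) => f ((Equiv.sigmaEquivProd ℕ ℕ) p))
    (fun x => hf _) h1 h2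
  exact (Equiv.sigmaEquivProd ℕ ℕ).hasSum_iff.mp this

private lemma hasSum_const_finite {α : Type*} [Finite α] (c : ℝ) :
    HasSum (fun _ : α => c) ((Nat.card α : ℝ) * c) := by
  have := Fintype.ofFinite α
  have h := hasSum_fintype (fun _ : α => c)
  simpa [Finset.sum_const, Nat.card_eq_fintype_card, nsmul_eq_mul] using h

private lemma weight_eq' (β r₀ r₁ : ℝ) (m n : ℕ) :
    Real.exp (-(β * (r₀ * m + r₁ * n))) =
      Real.exp (-(β * r₀)) ^ m * Real.exp (-(β * r₁)) ^ n := by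
  rw [← Real.exp_nat_mul, ← Real.exp_nat_mul, ← Real.exp_add]
  ring_nf

end Helpers

/-- For the 2-graph with three vertices `u, v, w` (with `w` an absolute source),
the series `y_w = ∑_{μ ∈ Λw} e^{-βr·d(μ)}` converges with sum
`1 + b₂e^{-βr₂} + b₁e^{-βr₁}Δ⁻¹ + a₂b₂e^{-2βr₂}(1-d₂e^{-βr₂})⁻¹`, where
`Δ = (1-d₁e^{-βr₁})(1-d₂e^{-βr₂})`. -/
theorem statement6 (Λ : KGraph 2) (hΛ : Λ.IsFinite)
    (u v w : Λ.Obj) (huv : u ≠ v) (huw : u ≠ w) (hvw : v ≠ w)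
    (hall : ∀ x : Λ.Obj, x = u ∨ x = v ∨ x = w)
    (d₁ d₂ a₁ a₂ b₁ b₂ : ℕ)
    (hd₁ : 1 ≤ d₁) (hd₂ : 1 ≤ d₂) (ha₁ : 1 ≤ a₁) (ha₂ : 1 ≤ a₂)
    (hb₁ : 1 ≤ b₁) (hb₂ : 1 ≤ b₂)
    (hcd₁ : {f : Λ.Hom u u | Λ.deg f = KGraph.gen 2 0}.ncard = d₁)
    (hcd₂ : {f : Λ.Hom u u | Λ.deg f = KGraph.gen 2 1}.ncard = d₂)
    (hca₁ : {f : Λ.Hom u v | Λ.deg f = KGraph.gen 2 0}.ncard = a₁)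
    (hca₂ : {f : Λ.Hom u v | Λ.deg f = KGraph.gen 2 1}.ncard = a₂)
    (hcb₁ : {f : Λ.Hom u w | Λ.deg f = KGraph.gen 2 0}.ncard = b₁)
    (hcb₂ : {f : Λ.Hom v w | Λ.deg f = KGraph.gen 2 1}.ncard = b₂)
    (hempty : ∀ (x y : Λ.Obj) (i : Fin 2) (f : Λ.Hom x y), Λ.deg f = KGraph.gen 2 i →
      (x = u ∧ y = u) ∨ (x = u ∧ y = v) ∨ (x = u ∧ y = w ∧ i = 0) ∨
        (x = v ∧ y = w ∧ i = 1))
    (r : Fin 2 → ℝ) (hr : ∀ i, 0 < r i) (β : ℝ) (hβ : 0 < β)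
    (hβr₁ : Real.log d₁ < β * r 0) (hβr₂ : Real.log d₂ < β * r 1) :
    HasSum
      (fun μ : Λ.PathTo w =>
        Real.exp (-(β * (r 0 * (Λ.deg μ.2 0 : ℝ) + r 1 * (Λ.deg μ.2 1 : ℝ)))))
      (1 + (b₂ : ℝ) * Real.exp (-(β * r 1)) +
        (b₁ : ℝ) * Real.exp (-(β * r 0)) *
          ((1 - (d₁ : ℝ) * Real.exp (-(β * r 0))) *
            (1 - (d₂ : ℝ) * Real.exp (-(β * r 1))))⁻¹ +
        (a₂ : ℝ) * (b₂ : ℝ) * Real.exp (-(2 * (β * r 1))) *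
          (1 - (d₂ : ℝ) * Real.exp (-(β * r 1)))⁻¹) := by
  classical
  set q1 : ℝ := Real.exp (-(β * r 0)) with hq1def
  set q2 : ℝ := Real.exp (-(β * r 1)) with hq2def
  have hq1pos : 0 < q1 := Real.exp_pos _
  have hq2pos : 0 < q2 := Real.exp_pos _
  have hd1pos : (0 : ℝ) < (d₁ : ℝ) := by exact_mod_cast hd₁
  have hd2pos : (0 : ℝ) < (d₂ : ℝ) := by exact_mod_cast hd₂
  have hd1nn : (0 : ℝ) ≤ (d₁ : ℝ) * q1 := by positivity
  have hd2nn : (0 : ℝ) ≤ (d₂ : ℝ) * q2 := by positivity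
  have hd1lt : (d₁ : ℝ) * q1 < 1 := by
    have h := (Real.log_lt_iff_lt_exp hd1pos).mp hβr₁
    calc (d₁ : ℝ) * q1 < Real.exp (β * r 0) * q1 := mul_lt_mul_of_pos_right h hq1pos
      _ = 1 := by rw [hq1def, ← Real.exp_add]; simp
  have hd2lt : (d₂ : ℝ) * q2 < 1 := by
    have h := (Real.log_lt_iff_lt_exp hd2pos).mp hβr₂
    calc (d₂ : ℝ) * q2 < Real.exp (β * r 1) * q2 := mul_lt_mul_of_pos_right h hq2pos
      _ = 1 := by rw [hq2def, ← Real.exp_add]; simp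
  have geo1 : HasSum (fun n : ℕ => ((d₁ : ℝ) * q1) ^ n) ((1 - (d₁ : ℝ) * q1)⁻¹) :=
    hasSum_geometric_of_lt_one hd1nn hd1lt
  have geo2 : HasSum (fun n : ℕ => ((d₂ : ℝ) * q2) ^ n) ((1 - (d₂ : ℝ) * q2)⁻¹) :=
    hasSum_geometric_of_lt_one hd2nn hd2lt
  -- vector arithmetic
  have hgen0 : KGraph.gen 2 0 = ![1, 0] := by
    funext i; fin_cases i <;> simp [KGraph.gen, Pi.single_apply]
  have hgen1 : KGraph.gen 2 1 = ![0, 1] := by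
    funext i; fin_cases i <;> simp [KGraph.gen, Pi.single_apply]
  have hzero : (0 : Fin 2 → ℕ) = ![0, 0] := by funext i; fin_cases i <;> simp
  have hadd1 : ∀ m n : ℕ, ![m, n] + KGraph.gen 2 0 = ![m + 1, n] := by
    intro m n; rw [hgen0]; funext i; fin_cases i <;> simp
  have hadd2 : ∀ m n : ℕ, ![m, n] + KGraph.gen 2 1 = ![m, n + 1] := by
    intro m n; rw [hgen1]; funext i; fin_cases i <;> simp
  -- cardinality hypotheses as Nat.card
  have hd₁' : Nat.card {f : Λ.Hom u u // Λ.deg f = KGraph.gen 2 0} = d₁ := by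
    have := Nat.card_coe_set_eq {f : Λ.Hom u u | Λ.deg f = KGraph.gen 2 0}
    rw [hcd₁] at this; exact this
  have hd₂' : Nat.card {f : Λ.Hom u u // Λ.deg f = KGraph.gen 2 1} = d₂ := by
    have := Nat.card_coe_set_eq {f : Λ.Hom u u | Λ.deg f = KGraph.gen 2 1}
    rw [hcd₂] at this; exact this
  have ha₂' : Nat.card {f : Λ.Hom u v // Λ.deg f = KGraph.gen 2 1} = a₂ := by
    have := Nat.card_coe_set_eq {f : Λ.Hom u v | Λ.deg f = KGraph.gen 2 1}
    rw [hca₂] at this; exact this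
  have hb₁' : Nat.card {f : Λ.Hom u w // Λ.deg f = KGraph.gen 2 0} = b₁ := by
    have := Nat.card_coe_set_eq {f : Λ.Hom u w | Λ.deg f = KGraph.gen 2 0}
    rw [hcb₁] at this; exact this
  have hb₂' : Nat.card {f : Λ.Hom v w // Λ.deg f = KGraph.gen 2 1} = b₂ := by
    have := Nat.card_coe_set_eq {f : Λ.Hom v w | Λ.deg f = KGraph.gen 2 1}
    rw [hcb₂] at this; exact this
  -- counting: loops at u
  have base_uu : Nat.card {f : Λ.Hom u u // Λ.deg f = ![0, 0]} = 1 := by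
    haveI : Unique {f : Λ.Hom u u // Λ.deg f = ![0, 0]} :=
      { default := ⟨Λ.id u, by rw [Λ.deg_id, hzero]⟩
        uniq := fun f => Subtype.ext
          (Λ.eq_id_of_deg_zero f.1 (by rw [f.2, ← hzero])) }
    exact Nat.card_unique
  have step_uu1 : ∀ m n : ℕ, Nat.card {f : Λ.Hom u u // Λ.deg f = ![m + 1, n]} =
      Nat.card {f : Λ.Hom u u // Λ.deg f = ![m, n]} * d₁ := by
    intro m n
    have h := Λ.card_split (x := u) (z := u) u ![m, n] (KGraph.gen 2 0) ?_
    · rw [hadd1] at h; rw [h, hd₁']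
    · intro y e g he hg
      rcases hempty y u 0 g hg with ⟨h1, h2⟩ | ⟨h1, h2⟩ | ⟨h1, h2, h3⟩ | ⟨h1, h2, h3⟩
      · exact h1
      · exact h1
      · exact h1
      · exact absurd h3 (by decide)
  have step_uu2 : ∀ m n : ℕ, Nat.card {f : Λ.Hom u u // Λ.deg f = ![m, n + 1]} =
      Nat.card {f : Λ.Hom u u // Λ.deg f = ![m, n]} * d₂ := by
    intro m n
    have h := Λ.card_split (x := u) (z := u) u ![m, n] (KGraph.gen 2 1) ?_
    · rw [hadd2] at h; rw [h, hd₂']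
    · intro y e g he hg
      rcases hempty y u 1 g hg with ⟨h1, h2⟩ | ⟨h1, h2⟩ | ⟨h1, h2, h3⟩ | ⟨h1, h2, h3⟩
      · exact h1
      · exact h1
      · exact h1
      · exact absurd h2 huw
  have Cuu : ∀ m n : ℕ, Nat.card {f : Λ.Hom u u // Λ.deg f = ![m, n]} = d₁ ^ m * d₂ ^ n := by
    intro m n
    induction m with
    | zero =>
      induction n with
      | zero => simpa using base_uu
      | succ n ih => rw [step_uu2, ih]; ring
    | succ m ih => rw [step_uu1, ih]; ring
  -- paths u → v of pure colour 2
  have Cuv0 : Nat.card {f : Λ.Hom u v // Λ.deg f = ![0, 0]} = 0 := by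
    haveI : IsEmpty {f : Λ.Hom u v // Λ.deg f = ![0, 0]} :=
      ⟨fun f => huv (Λ.eq_of_deg_zero f.1 (by rw [f.2, ← hzero]))⟩
    exact Nat.card_of_isEmpty
  have Cuv : ∀ n : ℕ, Nat.card {f : Λ.Hom u v // Λ.deg f = ![0, n + 1]} =
      d₂ ^ n * a₂ := by
    intro n
    have h := Λ.card_split (x := u) (z := v) u ![0, n] (KGraph.gen 2 1) ?_
    · rw [hadd2] at h; rw [h, ha₂', Cuu]; ring
    · intro y e g he hg
      rcases hempty y v 1 g hg with ⟨h1, h2⟩ | ⟨h1, h2⟩ | ⟨h1, h2, h3⟩ | ⟨h1, h2, h3⟩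
      · exact h1
      · exact h1
      · exact h1
      · exact absurd h2 hvw
  -- paths u → w
  have Cuw0 : Nat.card {f : Λ.Hom u w // Λ.deg f = ![0, 0]} = 0 := by
    haveI : IsEmpty {f : Λ.Hom u w // Λ.deg f = ![0, 0]} :=
      ⟨fun f => huw (Λ.eq_of_deg_zero f.1 (by rw [f.2, ← hzero]))⟩
    exact Nat.card_of_isEmpty
  have step_uw2 : ∀ n : ℕ, Nat.card {f : Λ.Hom u w // Λ.deg f = ![0, n + 1]} =
      Nat.card {f : Λ.Hom u v // Λ.deg f = ![0, n]} * b₂ := by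
    intro n
    have h := Λ.card_split (x := u) (z := w) v ![0, n] (KGraph.gen 2 1) ?_
    · rw [hadd2] at h; rw [h, hb₂']
    · intro y e g he hg
      rcases hempty y w 1 g hg with ⟨h1, h2⟩ | ⟨h1, h2⟩ | ⟨h1, h2, h3⟩ | ⟨h1, h2, h3⟩
      · exact absurd h2.symm huw
      · exact absurd h2.symm hvw
      · exact absurd h3 (by decide)
      · exact h1
  have Cuw01 : Nat.card {f : Λ.Hom u w // Λ.deg f = ![0, 1]} = 0 := by
    rw [step_uw2 0, Cuv0, Nat.zero_mul]
  have Cuw2 : ∀ n : ℕ, Nat.card {f : Λ.Hom u w // Λ.deg f = ![0, n + 2]} =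
      d₂ ^ n * a₂ * b₂ := by
    intro n; rw [step_uw2 (n + 1), Cuv n]
  have Cuw1 : ∀ m n : ℕ, Nat.card {f : Λ.Hom u w // Λ.deg f = ![m + 1, n]} =
      d₁ ^ m * d₂ ^ n * b₁ := by
    intro m n
    have h := Λ.card_split (x := u) (z := w) u ![m, n] (KGraph.gen 2 0) ?_
    · rw [hadd1] at h; rw [h, hb₁', Cuu]
    · intro y e g he hg
      rcases hempty y w 0 g hg with ⟨h1, h2⟩ | ⟨h1, h2⟩ | ⟨h1, h2, h3⟩ | ⟨h1, h2, h3⟩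
      · exact absurd h2.symm huw
      · exact absurd h2.symm hvw
      · exact h1
      · exact absurd h3 (by decide)
  -- morphisms out of w are trivial
  have Lw : ∀ (y : Λ.Obj) (g : Λ.Hom w y), Λ.deg g = 0 := by
    intro y g
    by_contra hne
    have hex : ∃ i, Λ.deg g i ≠ 0 := by
      by_contra hc; push_neg at hc; exact hne (funext fun i => hc i)
    obtain ⟨i, hi⟩ := hex
    obtain ⟨z, e, g', he, -⟩ := Λ.exists_front g i hi
    rcases hempty w z i e he with ⟨h1, h2⟩ | ⟨h1, h2⟩ | ⟨h1, h2, h3⟩ | ⟨h1, h2, h3⟩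
    · exact huw h1.symm
    · exact huw h1.symm
    · exact huw h1.symm
    · exact hvw h1.symm
  haveI hWW : Unique (Λ.Hom w w) :=
    { default := Λ.id w
      uniq := fun f => Λ.eq_id_of_deg_zero f (Lw w f) }
  -- morphisms v → w are exactly the b₂ edges
  have Hvw : ∀ f : Λ.Hom v w, Λ.deg f = KGraph.gen 2 1 := by
    intro f
    have h0 : Λ.deg f 0 = 0 := by
      by_contra h0
      obtain ⟨z, e, g', he, -⟩ := Λ.exists_front f 0 h0
      rcases hempty v z 0 e he with ⟨h1, h2⟩ | ⟨h1, h2⟩ | ⟨h1, h2, h3⟩ | ⟨h1, h2, h3⟩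
      · exact huv h1.symm
      · exact huv h1.symm
      · exact huv h1.symm
      · exact absurd h3 (by decide)
    have h1pos : Λ.deg f 1 ≠ 0 := by
      intro h1
      refine hvw (Λ.eq_of_deg_zero f (funext fun i => ?_))
      fin_cases i
      · simpa using h0
      · simpa using h1
    obtain ⟨z, e, g', he, hcomp⟩ := Λ.exists_front f 1 h1pos
    have hz : z = w := by
      rcases hempty v z 1 e he with ⟨h1, h2⟩ | ⟨h1, h2⟩ | ⟨h1, h2, h3⟩ | ⟨h1, h2, h3⟩
      · exact absurd h1.symm huv
      · exact absurd h1.symm huv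
      · exact absurd h1.symm huv
      · exact h2
    subst z
    have hg0 : Λ.deg g' = 0 := Lw w g'
    rw [← hcomp, Λ.deg_comp, he, hg0, add_zero]
  -- the sum over Hom u w
  have hfibeq : ∀ (p : ℕ × ℕ) (f : Λ.Hom u w),
      ((Λ.deg f 0, Λ.deg f 1) = p) ↔ Λ.deg f = ![p.1, p.2] := by
    intro p f
    rw [Prod.ext_iff, funext_iff]
    constructor
    · rintro ⟨h0, h1⟩ i; fin_cases i
      · simpa using h0
      · simpa using h1
    · intro h
      constructor
      · simpa using h 0
      · simpa using h 1
  have hfibfin : ∀ p : ℕ × ℕ,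
      Finite {f : Λ.Hom u w // (Λ.deg f 0, Λ.deg f 1) = p} := by
    intro p
    haveI := KGraph.finite_fiber hΛ u w ![p.1, p.2]
    exact Finite.of_equiv _ (Equiv.subtypeEquivRight fun f => (hfibeq p f).symm)
  have hfibcard : ∀ p : ℕ × ℕ,
      Nat.card {f : Λ.Hom u w // (Λ.deg f 0, Λ.deg f 1) = p} =
        Nat.card {f : Λ.Hom u w // Λ.deg f = ![p.1, p.2]} := fun p =>
    Nat.card_congr (Equiv.subtypeEquivRight fun f => hfibeq p f)
  have hfibsum : ∀ p : ℕ × ℕ,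
      HasSum (fun c : {f : Λ.Hom u w // (Λ.deg f 0, Λ.deg f 1) = p} =>
          Real.exp (-(β * (r 0 * (Λ.deg c.1 0 : ℝ) + r 1 * (Λ.deg c.1 1 : ℝ)))))
        ((Nat.card {f : Λ.Hom u w // Λ.deg f = ![p.1, p.2]} : ℝ) * (q1 ^ p.1 * q2 ^ p.2)) := by
    intro p
    haveI := hfibfin p
    have hconst : (fun c : {f : Λ.Hom u w // (Λ.deg f 0, Λ.deg f 1) = p} =>
        Real.exp (-(β * (r 0 * (Λ.deg c.1 0 : ℝ) + r 1 * (Λ.deg c.1 1 : ℝ))))) =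
        fun _ => q1 ^ p.1 * q2 ^ p.2 := by
      funext c
      have h0 : Λ.deg c.1 0 = p.1 := congrArg Prod.fst c.2
      have h1 : Λ.deg c.1 1 = p.2 := congrArg Prod.snd c.2
      rw [h0, h1, hq1def, hq2def, weight_eq']
    rw [hconst, ← hfibcard p]
    exact hasSum_const_finite _
  set G : ℕ → ℝ := fun m =>
    if m = 0 then (a₂ : ℝ) * b₂ * q2 ^ 2 * (1 - (d₂ : ℝ) * q2)⁻¹
    else (b₁ : ℝ) * (d₁ : ℝ) ^ (m - 1) * q1 ^ m * (1 - (d₂ : ℝ) * q2)⁻¹ with hGdef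
  have hrow : ∀ m : ℕ,
      HasSum (fun n : ℕ => (Nat.card {f : Λ.Hom u w // Λ.deg f = ![m, n]} : ℝ) *
        (q1 ^ m * q2 ^ n)) (G m) := by
    intro m
    match m with
    | 0 =>
      have heq : (fun n : ℕ => (Nat.card {f : Λ.Hom u w // Λ.deg f = ![0, n + 2]} : ℝ) *
          (q1 ^ 0 * q2 ^ (n + 2))) =
          fun n : ℕ => ((a₂ : ℝ) * b₂ * q2 ^ 2) * ((d₂ : ℝ) * q2) ^ n := by
        funext n; rw [Cuw2 n]; push_cast; ring
      have htail : HasSum (fun n : ℕ => (Nat.card {f : Λ.Hom u w // Λ.deg f = ![0, n + 2]} : ℝ) *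
          (q1 ^ 0 * q2 ^ (n + 2))) ((a₂ : ℝ) * b₂ * q2 ^ 2 * (1 - (d₂ : ℝ) * q2)⁻¹) := by
        rw [heq]
        exact geo2.mul_left _
      have h2' := (hasSum_nat_add_iff
        (f := fun n : ℕ => (Nat.card {f : Λ.Hom u w // Λ.deg f = ![0, n]} : ℝ) *
          (q1 ^ 0 * q2 ^ n)) 2).mp htail
      simp only [Finset.sum_range_succ, Finset.sum_range_zero, Cuw0, Cuw01] at h2'
      simpa [hGdef] using h2'
    | m + 1 =>
      have heq : (fun n : ℕ => (Nat.card {f : Λ.Hom u w // Λ.deg f = ![m + 1, n]} : ℝ) *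
          (q1 ^ (m + 1) * q2 ^ n)) =
          fun n : ℕ => ((b₁ : ℝ) * (d₁ : ℝ) ^ m * q1 ^ (m + 1)) * ((d₂ : ℝ) * q2) ^ n := by
        funext n; rw [Cuw1 m n]; push_cast; ring
      rw [heq]
      have := geo2.mul_left ((b₁ : ℝ) * (d₁ : ℝ) ^ m * q1 ^ (m + 1))
      simpa [hGdef] using this
  have hcol : HasSum G ((b₁ : ℝ) * q1 * ((1 - (d₁ : ℝ) * q1) * (1 - (d₂ : ℝ) * q2))⁻¹ +
      (a₂ : ℝ) * b₂ * q2 ^ 2 * (1 - (d₂ : ℝ) * q2)⁻¹) := by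
    have heq : (fun m : ℕ => G (m + 1)) =
        fun m : ℕ => ((b₁ : ℝ) * q1 * (1 - (d₂ : ℝ) * q2)⁻¹) * ((d₁ : ℝ) * q1) ^ m := by
      funext m; simp only [hGdef, Nat.succ_ne_zero, if_false, Nat.add_sub_cancel]
      rw [mul_pow]; ring
    have htail : HasSum (fun m : ℕ => G (m + 1))
        ((b₁ : ℝ) * q1 * (1 - (d₂ : ℝ) * q2)⁻¹ * (1 - (d₁ : ℝ) * q1)⁻¹) := by
      rw [heq]; exact geo1.mul_left _
    have h := (hasSum_nat_add_iff (f := G) 1).mp htail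
    simp only [Finset.sum_range_one] at h
    have hval : (b₁ : ℝ) * q1 * (1 - (d₂ : ℝ) * q2)⁻¹ * (1 - (d₁ : ℝ) * q1)⁻¹ + G 0 =
        (b₁ : ℝ) * q1 * ((1 - (d₁ : ℝ) * q1) * (1 - (d₂ : ℝ) * q2))⁻¹ +
          (a₂ : ℝ) * b₂ * q2 ^ 2 * (1 - (d₂ : ℝ) * q2)⁻¹ := by
      simp only [hGdef, if_pos rfl]
      rw [mul_inv]; ring
    rwa [hval] at h
  have hu_sum : HasSum (fun f : Λ.Hom u w =>
      Real.exp (-(β * (r 0 * (Λ.deg f 0 : ℝ) + r 1 * (Λ.deg f 1 : ℝ)))))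
      ((b₁ : ℝ) * q1 * ((1 - (d₁ : ℝ) * q1) * (1 - (d₂ : ℝ) * q2))⁻¹ +
        (a₂ : ℝ) * b₂ * q2 ^ 2 * (1 - (d₂ : ℝ) * q2)⁻¹) := by
    apply (Equiv.sigmaFiberEquiv (fun f : Λ.Hom u w => (Λ.deg f 0, Λ.deg f 1))).hasSum_iff.mp
    apply hasSum_sigma_nonneg' (fun x => (Real.exp_pos _).le)
      (g := fun p : ℕ × ℕ => (Nat.card {f : Λ.Hom u w // Λ.deg f = ![p.1, p.2]} : ℝ) *
        (q1 ^ p.1 * q2 ^ p.2))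
    · intro p; exact hfibsum p
    · exact hasSum_prod_nonneg' (fun p => by positivity) hrow hcol
  -- the sum over Hom v w
  haveI : Finite (Λ.Hom v w) := by
    haveI := KGraph.finite_fiber hΛ v w (KGraph.gen 2 1)
    exact Finite.of_equiv _ (Equiv.subtypeUnivEquiv Hvw)
  have hv_sum : HasSum (fun f : Λ.Hom v w =>
      Real.exp (-(β * (r 0 * (Λ.deg f 0 : ℝ) + r 1 * (Λ.deg f 1 : ℝ))))) ((b₂ : ℝ) * q2) := by
    have hconst : (fun f : Λ.Hom v w =>
        Real.exp (-(β * (r 0 * (Λ.deg f 0 : ℝ) + r 1 * (Λ.deg f 1 : ℝ))))) =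
        fun _ => q2 := by
      funext f
      have h0 : Λ.deg f 0 = 0 := by rw [Hvw f, hgen1]; simp
      have h1 : Λ.deg f 1 = 1 := by rw [Hvw f, hgen1]; simp
      rw [h0, h1, hq2def]
      norm_num
    rw [hconst]
    have hcard : Nat.card (Λ.Hom v w) = b₂ :=
      (Nat.card_congr (Equiv.subtypeUnivEquiv Hvw)).symm.trans hb₂'
    have h := hasSum_const_finite (α := Λ.Hom v w) q2
    rwa [hcard] at h
  -- the sum over Hom w w
  have hw_sum : HasSum (fun f : Λ.Hom w w =>
      Real.exp (-(β * (r 0 * (Λ.deg f 0 : ℝ) + r 1 * (Λ.deg f 1 : ℝ))))) 1 := by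
    have hconst : (fun f : Λ.Hom w w =>
        Real.exp (-(β * (r 0 * (Λ.deg f 0 : ℝ) + r 1 * (Λ.deg f 1 : ℝ))))) =
        fun _ => (1 : ℝ) := by
      funext f
      have h := Lw w f
      have h0 : Λ.deg f 0 = 0 := by rw [h]; rfl
      have h1 : Λ.deg f 1 = 0 := by rw [h]; rfl
      rw [h0, h1]
      norm_num
    rw [hconst]
    have h := hasSum_const_finite (α := Λ.Hom w w) (1 : ℝ)
    simpa [Nat.card_unique] using h
  -- assemble over the three vertices
  haveI : Finite Λ.Obj := by
    apply Finite.of_surjective (![u, v, w] : Fin 3 → Λ.Obj)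
    intro x
    rcases hall x with rfl | rfl | rfl
    exacts [⟨0, rfl⟩, ⟨1, rfl⟩, ⟨2, rfl⟩]
  haveI := Fintype.ofFinite Λ.Obj
  set Su : ℝ := (b₁ : ℝ) * q1 * ((1 - (d₁ : ℝ) * q1) * (1 - (d₂ : ℝ) * q2))⁻¹ +
      (a₂ : ℝ) * b₂ * q2 ^ 2 * (1 - (d₂ : ℝ) * q2)⁻¹ with hSudef
  set g : Λ.Obj → ℝ := fun x => if x = u then Su else if x = v then (b₂ : ℝ) * q2 else 1
    with hgdef
  have hg : ∀ x : Λ.Obj, HasSum (fun f : Λ.Hom x w =>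
      Real.exp (-(β * (r 0 * (Λ.deg f 0 : ℝ) + r 1 * (Λ.deg f 1 : ℝ))))) (g x) := by
    intro x
    rcases hall x with rfl | rfl | rfl
    · simp only [hgdef, if_pos rfl]
      exact hu_sum
    · simp only [hgdef, if_neg (Ne.symm huv), if_pos rfl]
      exact hv_sum
    · simp only [hgdef, if_neg (Ne.symm huw), if_neg (Ne.symm hvw)]
      exact hw_sum
  have htot : HasSum g (Su + ((b₂ : ℝ) * q2 + 1)) := by
    have h := hasSum_fintype g
    have huniv : (Finset.univ : Finset Λ.Obj) = {u, v, w} :=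
      (Finset.eq_univ_iff_forall.mpr fun x => by simp [hall x]).symm
    rw [huniv, Finset.sum_insert (by simp [huv, huw]),
      Finset.sum_insert (by simp [hvw]), Finset.sum_singleton] at h
    have hgu : g u = Su := by simp [hgdef]
    have hgv : g v = (b₂ : ℝ) * q2 := by simp [hgdef, Ne.symm huv]
    have hgw : g w = 1 := by simp [hgdef, Ne.symm huw, Ne.symm hvw]
    rwa [hgu, hgv, hgw] at h
  have final : HasSum (fun μ : Λ.PathTo w =>
      Real.exp (-(β * (r 0 * (Λ.deg μ.2 0 : ℝ) + r 1 * (Λ.deg μ.2 1 : ℝ)))))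
      (Su + ((b₂ : ℝ) * q2 + 1)) :=
    hasSum_sigma_nonneg' (fun μ => (Real.exp_pos _).le) hg htot
  have hexp2 : Real.exp (-(2 * (β * r 1))) = q2 ^ 2 := by
    have h : (-(2 * (β * r 1))) = ((2 : ℕ) : ℝ) * (-(β * r 1)) := by push_cast; ring
    rw [h, Real.exp_nat_mul, hq2def]
  convert final using 1
  rw [hexp2, hSudef]
  ring
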